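/- In anti-de Sitter space X_{-1}, rotations around a fixed spacelike geodesic l act freely and transitively on the dual spacelike geodesic l*, and also act freely and transitively on the set of spacelike planes containing l; consequently, for any two spacelike planes P₁, P₂ containing l, there is a unique rotation around l taking P₁ to P₂. -/

import Mathlib

noncomputable section

open Matrix

/-- The bilinear form on `2×2` real matrices polarizing the quadratic form `-det`,
inducing the anti-de Sitter metric on the quadric `{det = 1}`. -/
def bform (A B : Matrix (Fin 2) (Fin 2) ℝ) : ℝ :=
  -(((A + B).det - A.det - B.det) / 2)

/-- The spacelike geodesic through `P` with unit spacelike direction `V`. -/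
def geo (P V : Matrix (Fin 2) (Fin 2) ℝ) (t : ℝ) : Matrix (Fin 2) (Fin 2) ℝ :=
  Real.cosh t • P + Real.sinh t • V

/-- The dual geodesic `l*` of the spacelike geodesic through `P`, `V`: the set of dual
points of the spacelike planes containing `l`, i.e. the unit quadric in the
`bform`-orthogonal complement of the span of `P` and `V`. -/
def dualGeo (P V : Matrix (Fin 2) (Fin 2) ℝ) : Set (Matrix (Fin 2) (Fin 2) ℝ) :=
  {z | z.det = 1 ∧ bform z P = 0 ∧ bform z V = 0}

/-- The spacelike plane dual to the point `x` of the quadric. -/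
def dualPlane (x : Matrix (Fin 2) (Fin 2) ℝ) : Set (Matrix (Fin 2) (Fin 2) ℝ) :=
  {z | z.det = 1 ∧ bform x z = 0}

/-- The isometry of `X₋₁` given by the pair `(g,h)`. -/
def adsAct (g h : Matrix.SpecialLinearGroup (Fin 2) ℝ)
    (z : Matrix (Fin 2) (Fin 2) ℝ) : Matrix (Fin 2) (Fin 2) ℝ :=
  (g : Matrix (Fin 2) (Fin 2) ℝ) * z *
    ((h⁻¹ : Matrix.SpecialLinearGroup (Fin 2) ℝ) : Matrix (Fin 2) (Fin 2) ℝ)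

/-- `(g,h)` is a rotation around the spacelike geodesic `l = geo P V`: it fixes `l`
pointwise (projectively). -/
def IsRot (P V : Matrix (Fin 2) (Fin 2) ℝ)
    (g h : Matrix.SpecialLinearGroup (Fin 2) ℝ) : Prop :=
  ∀ t : ℝ, adsAct g h (geo P V t) = geo P V t ∨ adsAct g h (geo P V t) = -(geo P V t)

/-- `(g,h)` acts (projectively) trivially on `X₋₁`. -/
def ProjTrivial (g h : Matrix.SpecialLinearGroup (Fin 2) ℝ) : Prop :=
  ∀ z : Matrix (Fin 2) (Fin 2) ℝ, z.det = 1 → adsAct g h z = z ∨ adsAct g h z = -z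

abbrev M2 := Matrix (Fin 2) (Fin 2) ℝ
abbrev SL2 := Matrix.SpecialLinearGroup (Fin 2) ℝ

lemma adj2 (A : M2) : adjugate A = (trace A) • (1:M2) - A := by
  rw [Matrix.adjugate_fin_two]
  ext i j
  fin_cases i <;> fin_cases j <;>
    simp [Matrix.trace_fin_two, Matrix.one_apply] <;> ring

lemma CH (A : M2) : A*A = trace A • A - A.det • (1:M2) := by
  ext i j
  fin_cases i <;> fin_cases j <;>
    simp [Matrix.mul_apply, Fin.sum_univ_two, Matrix.trace_fin_two,
      Matrix.det_fin_two, Matrix.one_apply] <;> ring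

lemma bform_tr (A B : M2) : bform A B = -(trace (adjugate A * B))/2 := by
  simp only [bform, Matrix.det_fin_two, Matrix.adjugate_fin_two, Matrix.trace_fin_two,
    Matrix.mul_apply, Fin.sum_univ_two, Matrix.add_apply]
  norm_num
  ring

lemma bform_comm (A B : M2) : bform A B = bform B A := by
  unfold bform; rw [add_comm A B]; ring

lemma bform_self (A : M2) : bform A A = -A.det := by
  simp only [bform, Matrix.det_fin_two, Matrix.add_apply]
  ring

lemma anticomm (A B : M2) (hA : trace A = 0) (hB : trace B = 0) :
    A*B + B*A = trace (A*B) • (1:M2) := by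
  rw [Matrix.trace_fin_two] at hA hB ⊢
  have hA' : A 1 1 = -(A 0 0) := by linarith
  have hB' : B 1 1 = -(B 0 0) := by linarith
  ext i j
  fin_cases i <;> fin_cases j <;>
    simp [Matrix.mul_apply, Fin.sum_univ_two, Matrix.one_apply, hA', hB'] <;> ring

lemma det_comb (W : M2) (a b : ℝ) :
    (a•(1:M2) + b•W).det = a^2 + a*b*trace W + b^2*W.det := by
  simp [Matrix.det_fin_two, Matrix.trace_fin_two, Matrix.one_apply]
  ring

/-- one-parameter group  `exp(c W)` for an involution `W`. -/
def rotE (W : M2) (c : ℝ) : M2 := Real.cosh c • (1:M2) + Real.sinh c • W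

lemma rotE_zero (W : M2) : rotE W 0 = 1 := by simp [rotE]

lemma rotE_mul (W : M2) (hW : W*W = 1) (c d : ℝ) :
    rotE W c * rotE W d = rotE W (c+d) := by
  simp only [rotE, add_mul, mul_add, smul_mul_assoc, mul_smul_comm, one_mul, mul_one, hW,
    smul_smul, Real.cosh_add, Real.sinh_add]
  module

lemma rotE_det (W : M2) (htr : trace W = 0) (hdet : W.det = -1) (c : ℝ) :
    (rotE W c).det = 1 := by
  rw [rotE, det_comb, htr, hdet]
  have := Real.cosh_sq_sub_sinh_sq c
  nlinarith

lemma trace_rotE (W : M2) (htr : trace W = 0) (c : ℝ) : trace (rotE W c) = 2*Real.cosh c := by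
  simp [rotE, trace_smul, htr, Matrix.trace_one]
  ring

lemma adj_rotE (W : M2) (htr : trace W = 0) (c : ℝ) :
    adjugate (rotE W c) = rotE W (-c) := by
  rw [adj2, trace_rotE W htr]
  simp only [rotE, Real.cosh_neg, Real.sinh_neg]
  module

lemma indep (W : M2) (htr : trace W = 0) (hdet : W.det = -1) (a b : ℝ)
    (h : a•(1:M2) + b•W = 0) : a = 0 ∧ b = 0 := by
  have h1 : trace (a•(1:M2) + b•W) = 0 := by rw [h]; simp
  have h2 : (a•(1:M2) + b•W).det = 0 := by rw [h]; simp [Matrix.det_fin_two]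
  rw [det_comb, hdet, htr] at h2
  rw [trace_add, trace_smul, trace_smul, Matrix.trace_one, htr] at h1
  have ha : a = 0 := by
    have : (2:ℝ) • a = a * 2 := by ring_nf
    simp [smul_eq_mul] at h1; linarith
  subst ha
  refine ⟨rfl, ?_⟩
  nlinarith

lemma commutant (W m : M2) (htr : trace W = 0) (hWW : W*W = 1)
    (hc : m*W = W*m) : m = (trace m/2)•(1:M2) + (trace (m*W)/2)•W := by
  set a : M2 := m - (trace m/2)•(1:M2) with ha
  have htra : trace a = 0 := by
    rw [ha, trace_sub, trace_smul, Matrix.trace_one]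
    simp [smul_eq_mul]
  have hcomm : a*W = W*a := by
    rw [ha, sub_mul, mul_sub, smul_mul_assoc, mul_smul_comm, one_mul, mul_one, hc]
  have hanti := anticomm a W htra htr
  set t : ℝ := trace (a*W) with ht
  have e3 : a * W = (t/2) • (1:M2) := by
    have h2 : a*W + a*W = t • (1:M2) := by
      calc a*W + a*W = a*W + W*a := by rw [hcomm]
        _ = t • (1:M2) := hanti
    have h2' : (2:ℝ) • (a*W) = t • (1:M2) := by rw [two_smul]; exact h2
    calc a*W = (2:ℝ)⁻¹ • ((2:ℝ)•(a*W)) := by module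
      _ = (2:ℝ)⁻¹ • (t • (1:M2)) := by rw [h2']
      _ = (t/2) • (1:M2) := by module
  have e4 : a = (t/2) • W := by
    have h5 : a * (W*W) = ((t/2) • (1:M2)) * W := by rw [← mul_assoc, e3]
    rw [hWW, mul_one, smul_mul_assoc, one_mul] at h5
    exact h5
  have htr2 : t = trace (m*W) := by
    rw [ht, ha, sub_mul, trace_sub, smul_mul_assoc, one_mul, trace_smul, htr]
    simp
  rw [htr2] at e4
  rw [ha] at e4
  rw [← e4]
  abel

lemma eq_pm_rotE (W m : M2) (htr : trace W = 0) (hdetW : W.det = -1) (hWW : W*W = 1)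
    (hc : m*W = W*m) (hdm : m.det = 1) :
    ∃ c : ℝ, m = rotE W c ∨ m = -(rotE W c) := by
  obtain h := commutant W m htr hWW hc
  set α := trace m / 2 with hα'
  set β := trace (m*W)/2 with hβ'
  have hαβ : α^2 - β^2 = 1 := by
    have := det_comb W α β
    rw [← h, hdm, htr, hdetW] at this
    nlinarith
  have hα : α ≠ 0 := by
    intro h0; rw [h0] at hαβ; nlinarith
  set δ : ℝ := if 0 < α then 1 else -1 with hδ
  have hδ2 : δ^2 = 1 := by
    by_cases h1 : 0 < α <;> simp [hδ, h1] <;> norm_num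
  have hδα : δ * α = |α| := by
    rcases lt_trichotomy 0 α with h1|h1|h1
    · rw [hδ, if_pos h1, abs_of_pos h1]; ring
    · exact absurd h1.symm hα
    · rw [hδ, if_neg (by linarith), abs_of_neg h1]; ring
  set c := Real.arsinh (δ*β) with hcdef
  have hsinh : Real.sinh c = δ * β := Real.sinh_arsinh _
  have hcosh : Real.cosh c = δ * α := by
    rw [hcdef, Real.cosh_arsinh]
    have h6 : 1 + (δ*β)^2 = α^2 := by nlinarith
    rw [h6, Real.sqrt_sq_eq_abs, ← hδα]
  have h7 : δ * (δ * α) = α := by linear_combination α * hδ2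
  have h8 : δ * (δ * β) = β := by linear_combination β * hδ2
  have hm : m = δ • rotE W c := by
    rw [h, rotE, smul_add, smul_smul, smul_smul, hcosh, hsinh, h7, h8]
  refine ⟨c, ?_⟩
  by_cases h1 : 0 < α
  · left; rw [hm, hδ, if_pos h1, one_smul]
  · right; rw [hm, hδ, if_neg h1, neg_smul, one_smul]

lemma swapE (W u : M2) (hanti : u*W = -(W*u)) (c : ℝ) :
    u * rotE W (-c) = rotE W c * u := by
  rw [rotE, rotE, Real.cosh_neg, Real.sinh_neg, mul_add, add_mul, mul_smul_comm,
    mul_smul_comm, smul_mul_assoc, smul_mul_assoc, mul_one, one_mul, hanti]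
  module

lemma act_core (P Q W u : M2) (hQP : Q*P = 1) (hWW : W*W = 1)
    (hanti : u*W = -(W*u)) (c : ℝ) :
    (P * rotE W c * Q) * (P * u) * rotE W (-c) = P * rotE W (2*c) * u := by
  have h1 : (P * rotE W c * Q) * (P * u) = P * rotE W c * u := by
    rw [mul_assoc (P * rotE W c) Q (P*u), ← mul_assoc Q P u, hQP, one_mul]
  rw [h1, mul_assoc (P * rotE W c) u _, swapE W u hanti c, ← mul_assoc,
    mul_assoc P (rotE W c) (rotE W c), rotE_mul W hWW, two_mul]

lemma act_geo (P Q W : M2) (hQP : Q*P = 1) (hWW : W*W = 1) (c t : ℝ) :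
    (P * rotE W c * Q) * (P * rotE W t) * rotE W (-c) = P * rotE W t := by
  have h1 : (P * rotE W c * Q) * (P * rotE W t) = P * (rotE W c * rotE W t) := by
    rw [mul_assoc (P * rotE W c) Q _, ← mul_assoc Q P _, hQP, one_mul, mul_assoc]
  rw [h1, rotE_mul W hWW, mul_assoc, rotE_mul W hWW]
  norm_num

lemma PQ_one (P : M2) (hP : P.det = 1) : P * adjugate P = 1 := by
  rw [Matrix.mul_adjugate, hP, one_smul]

lemma QP_one (P : M2) (hP : P.det = 1) : adjugate P * P = 1 := by
  rw [Matrix.adjugate_mul, hP, one_smul]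

lemma detV_eq (V : M2) (hV : bform V V = 1) : V.det = -1 := by
  rw [bform_self] at hV; linarith

lemma trW_eq (P V : M2) (hPV : bform P V = 0) : trace (adjugate P * V) = 0 := by
  rw [bform_tr] at hPV; linarith

lemma detW_eq (P V : M2) (hP : P.det = 1) (hV : bform V V = 1) :
    (adjugate P * V).det = -1 := by
  rw [det_mul, Matrix.det_adjugate, hP, detV_eq V hV]; norm_num

lemma WW_eq (P V : M2) (hP : P.det = 1) (hPV : bform P V = 0) (hV : bform V V = 1) :
    (adjugate P * V) * (adjugate P * V) = 1 := by
  rw [CH, trW_eq P V hPV, detW_eq P V hP hV]; simp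

lemma PW_eq (P V : M2) (hP : P.det = 1) : P * (adjugate P * V) = V := by
  rw [← mul_assoc, PQ_one P hP, one_mul]

lemma geo_eq (P V : M2) (hP : P.det = 1) (t : ℝ) :
    geo P V t = P * rotE (adjugate P * V) t := by
  rw [geo, rotE, mul_add, mul_smul_comm, mul_smul_comm, mul_one, PW_eq P V hP]

lemma dualGeo_decomp (P V : M2) (hP : P.det = 1) (hPV : bform P V = 0)
    (hV : bform V V = 1) (z : M2) (hz : z ∈ dualGeo P V) :
    ∃ u : M2, z = P * u ∧ u.det = 1 ∧ trace u = 0 ∧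
      u * (adjugate P * V) = -((adjugate P * V) * u) ∧ u * u = -1 := by
  obtain ⟨hz1, hz2, hz3⟩ := hz
  set W := adjugate P * V with hWdef
  set u := adjugate P * z with hudef
  have htrW : trace W = 0 := trW_eq P V hPV
  have hdetu : u.det = 1 := by
    rw [hudef, det_mul, Matrix.det_adjugate, hP, hz1]; norm_num
  have htru : trace u = 0 := by
    have := bform_comm z P ▸ hz2
    exact trW_eq P z this
  have hanti : u * W = -(W * u) := by
    have htruW : trace (u * W) = 0 := by
      have hVz : bform V z = 0 := bform_comm z V ▸ hz3
      rw [bform_tr] at hVz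
      have hadjV : adjugate V = -(W * adjugate P) := by
        have h1 : V = P * W := (PW_eq P V hP).symm
        rw [h1, Matrix.adjugate_mul_distrib, adj2 W, htrW, zero_smul, zero_sub, neg_mul]
      rw [hadjV, neg_mul, trace_neg, mul_assoc, ← hudef] at hVz
      rw [trace_mul_comm]
      linarith
    have h2 := anticomm u W htru htrW
    rw [htruW, zero_smul] at h2
    exact eq_neg_of_add_eq_zero_left h2
  have husq : u * u = -1 := by
    rw [CH, htru, hdetu, zero_smul, one_smul, zero_sub]
  exact ⟨u, by rw [hudef, ← mul_assoc, PQ_one P hP, one_mul], hdetu, htru, hanti, husq⟩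

lemma det_adsAct (g h : SL2) (z : M2) : (adsAct g h z).det = z.det := by
  rw [adsAct, det_mul, det_mul, Matrix.SpecialLinearGroup.det_coe,
    Matrix.SpecialLinearGroup.det_coe, one_mul, mul_one]

lemma rot_classify (P V : M2) (hP : P.det = 1) (hPV : bform P V = 0) (hV : bform V V = 1)
    (g h : SL2) (hrot : IsRot P V g h) :
    ∃ ε c : ℝ, (ε = 1 ∨ ε = -1) ∧
      ∀ z : M2, adsAct g h z =
        ε • (P * rotE (adjugate P * V) c * adjugate P * z * rotE (adjugate P * V) (-c)) := by
  set W := adjugate P * V with hWdef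
  have htrW : trace W = 0 := trW_eq P V hPV
  have hdetW : W.det = -1 := detW_eq P V hP hV
  have hWW : W*W = 1 := WW_eq P V hP hPV hV
  set G : M2 := (g : M2) with hG
  set H : M2 := (h : M2) with hH
  have hH' : ((h⁻¹ : SL2) : M2) = adjugate H := Matrix.SpecialLinearGroup.coe_inv h
  set A' : M2 := adsAct g h P with hA'def
  set B' : M2 := adsAct g h V with hB'def
  have hlin : ∀ t : ℝ, adsAct g h (geo P V t) = Real.cosh t • A' + Real.sinh t • B' := by
    intro t
    rw [hA'def, hB'def]
    simp only [adsAct, geo, add_mul, mul_add, mul_smul_comm, smul_mul_assoc]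
  have hdetA' : A'.det = 1 := by rw [hA'def, det_adsAct g h P, hP]
  have hdetV : V.det = -1 := detV_eq V hV
  have e1 := hrot 1
  have e2 := hrot (-1)
  rw [hlin 1] at e1
  rw [hlin (-1), Real.cosh_neg, Real.sinh_neg] at e2
  rw [show geo P V 1 = Real.cosh 1 • P + Real.sinh 1 • V from rfl] at e1
  rw [show geo P V (-1) = Real.cosh (-1) • P + Real.sinh (-1) • V from rfl,
    Real.cosh_neg, Real.sinh_neg] at e2
  have hc1 : (0:ℝ) < Real.cosh 1 := Real.cosh_pos 1
  have hs1 : (0:ℝ) < Real.sinh 1 := Real.sinh_pos_iff.2 one_pos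
  have hnc : (2 * Real.cosh 1 : ℝ) ≠ 0 := by positivity
  have hns : (2 * Real.sinh 1 : ℝ) ≠ 0 := by positivity
  have key : ∃ ε : ℝ, (ε = 1 ∨ ε = -1) ∧ A' = ε • P ∧ B' = ε • V := by
    have contra : ∀ s : ℝ, (2 * Real.cosh 1) • A' = (s * (2 * Real.sinh 1)) • V → False := by
      intro s hs
      have hd := congrArg Matrix.det hs
      rw [Matrix.det_smul, Matrix.det_smul, hdetA', hdetV] at hd
      simp only [Fintype.card_fin] at hd
      nlinarith [sq_nonneg (s * (2*Real.sinh 1)), sq_nonneg (2*Real.cosh 1)]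
    rcases e1 with e1 | e1 <;> rcases e2 with e2 | e2
    · refine ⟨1, Or.inl rfl, ?_, ?_⟩
      · have h0 : (2*Real.cosh 1) • A' = (2*Real.cosh 1) • ((1:ℝ) • P) := by
          linear_combination (norm := module) e1 + e2
        exact smul_right_injective M2 hnc h0
      · have h0 : (2*Real.sinh 1) • B' = (2*Real.sinh 1) • ((1:ℝ) • V) := by
          linear_combination (norm := module) e1 - e2
        exact smul_right_injective M2 hns h0
    · exfalso
      refine contra 1 ?_
      linear_combination (norm := module) e1 + e2
    · exfalso
      refine contra (-1) ?_
      linear_combination (norm := module) e1 + e2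
    · refine ⟨-1, Or.inr rfl, ?_, ?_⟩
      · have h0 : (2*Real.cosh 1) • A' = (2*Real.cosh 1) • ((-1:ℝ) • P) := by
          linear_combination (norm := module) e1 + e2
        exact smul_right_injective M2 hnc h0
      · have h0 : (2*Real.sinh 1) • B' = (2*Real.sinh 1) • ((-1:ℝ) • V) := by
          linear_combination (norm := module) e1 - e2
        exact smul_right_injective M2 hns h0
  obtain ⟨ε, hε, hA, hB⟩ := key
  have hε2 : ε * ε = 1 := by rcases hε with h | h <;> rw [h] <;> norm_num
  have hεne : ε ≠ 0 := by rcases hε with h | h <;> rw [h] <;> norm_num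
  have hHH' : adjugate H * H = 1 := by
    rw [Matrix.adjugate_mul, Matrix.SpecialLinearGroup.det_coe, one_smul]
  have hHH : H * adjugate H = 1 := by
    rw [Matrix.mul_adjugate, Matrix.SpecialLinearGroup.det_coe, one_smul]
  -- G * P = ε • (P * H)
  have hGP : G * P = ε • (P * H) := by
    have h1 : (G * P * adjugate H) * H = (ε • P) * H := by
      rw [hA'def] at hA
      simp only [adsAct, hH'] at hA
      rw [hA]
    rw [mul_assoc, hHH', mul_one, smul_mul_assoc] at h1
    exact h1
  have hGV : G * V = ε • (V * H) := by
    have h1 : (G * V * adjugate H) * H = (ε • V) * H := by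
      rw [hB'def] at hB
      simp only [adsAct, hH'] at hB
      rw [hB]
    rw [mul_assoc, hHH', mul_one, smul_mul_assoc] at h1
    exact h1
  -- H commutes with W
  have hHW : H * W = W * H := by
    have h1 : G * (P * W) = ε • ((P * W) * H) := by rw [hWdef, PW_eq P V hP]; exact hGV
    have h2 : (G * P) * W = ε • (P * (H * W)) := by
      rw [hGP, smul_mul_assoc, mul_assoc]
    rw [← mul_assoc] at h1
    rw [h2] at h1
    have h3 : P * (H * W) = P * (W * H) := by
      apply smul_right_injective M2 hεne
      show ε • (P * (H * W)) = ε • (P * (W * H))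
      rw [h1, mul_assoc]
    have h4 := congrArg (fun x => adjugate P * x) h3
    simp only [← mul_assoc, QP_one P hP, one_mul] at h4
    exact h4
  obtain ⟨c, hc⟩ := eq_pm_rotE W H htrW hdetW hWW hHW (Matrix.SpecialLinearGroup.det_coe h)
  refine ⟨ε, c, hε, ?_⟩
  intro z
  have hGeq : G = ε • (P * H * adjugate P) := by
    have h1 := congrArg (fun x => x * adjugate P) hGP
    simp only [mul_assoc, smul_mul_assoc] at h1
    rw [PQ_one P hP, mul_one] at h1
    rw [h1, ← mul_assoc]
  have hstep : adsAct g h z = G * z * adjugate H := by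
    show (g : M2) * z * ((h⁻¹ : SL2) : M2) = G * z * adjugate H
    rw [hH', hG]
  rw [hstep, hGeq]
  rcases hc with hc | hc
  · rw [hc, adj_rotE W htrW, smul_mul_assoc, smul_mul_assoc]
  · have hadjneg : adjugate (-(rotE W c)) = -(rotE W (-c)) := by
      rw [show -(rotE W c) = (-1 : ℝ) • rotE W c by rw [neg_one_smul],
        Matrix.adjugate_smul, adj_rotE W htrW]
      simp
    rw [hc, hadjneg]
    simp only [mul_neg, neg_mul, smul_neg, neg_neg, smul_mul_assoc]

lemma bform_adsAct (g h : SL2) (A B : M2) :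
    bform (adsAct g h A) (adsAct g h B) = bform A B := by
  have hsum : adsAct g h A + adsAct g h B = adsAct g h (A + B) := by
    simp only [adsAct, add_mul, mul_add]
  rw [bform, bform, hsum, det_adsAct, det_adsAct, det_adsAct]

lemma adsAct_left_inv (g h : SL2) (z : M2) : adsAct g h (adsAct g⁻¹ h⁻¹ z) = z := by
  simp only [adsAct, inv_inv]
  have h1 : (g : M2) * ((g⁻¹ : SL2) : M2) = 1 := by
    rw [← Matrix.SpecialLinearGroup.coe_mul, mul_inv_cancel]
    rfl
  have h2 : (h : M2) * ((h⁻¹ : SL2) : M2) = 1 := by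
    rw [← Matrix.SpecialLinearGroup.coe_mul, mul_inv_cancel]
    rfl
  calc (g:M2) * (((g⁻¹:SL2):M2) * z * ((h:M2))) * ((h⁻¹:SL2):M2)
      = ((g:M2) * ((g⁻¹:SL2):M2)) * z * ((h:M2) * ((h⁻¹:SL2):M2)) := by
        simp only [mul_assoc]
    _ = z := by rw [h1, h2, one_mul, mul_one]

lemma image_dualPlane (g h : SL2) (x : M2) :
    adsAct g h '' dualPlane x = dualPlane (adsAct g h x) := by
  ext w
  constructor
  · rintro ⟨z, ⟨hz1, hz2⟩, rfl⟩
    exact ⟨by rw [det_adsAct]; exact hz1, by rw [bform_adsAct]; exact hz2⟩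
  · rintro ⟨hw1, hw2⟩
    refine ⟨adsAct g⁻¹ h⁻¹ w, ⟨by rw [det_adsAct]; exact hw1, ?_⟩, adsAct_left_inv g h w⟩
    have := bform_adsAct g h x (adsAct g⁻¹ h⁻¹ w)
    rw [adsAct_left_inv g h w] at this
    rw [← this]
    exact hw2

lemma bform_smul_left (σ : ℝ) (x z : M2) : bform (σ • x) z = σ * bform x z := by
  rw [bform_tr, bform_tr, Matrix.adjugate_smul]
  simp only [Fintype.card_fin, pow_one, smul_mul_assoc, trace_smul, smul_eq_mul]
  ring

lemma dualPlane_smul (σ : ℝ) (hσ : σ ≠ 0) (x : M2) : dualPlane (σ • x) = dualPlane x := by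
  ext z
  simp only [dualPlane, Set.mem_setOf_eq, bform_smul_left, mul_eq_zero, and_congr_right_iff]
  intro _
  constructor
  · rintro (h | h)
    · exact absurd h hσ
    · exact h
  · intro h; exact Or.inr h

lemma dualPlane_inj (a b : M2) (ha : a.det = 1) (hb : b.det = 1)
    (hab : dualPlane a = dualPlane b) : a = b ∨ a = -b := by
  have key : ∀ u : M2, u.trace = 0 → u.det = 1 → a * u ∈ dualPlane b := by
    intro u htru hdetu
    have h1 : a * u ∈ dualPlane a := by
      constructor
      · rw [det_mul, ha, hdetu, one_mul]
      · rw [bform_tr, ← mul_assoc, Matrix.adjugate_mul, ha, one_smul, one_mul, htru]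
        norm_num
    rwa [hab] at h1
  set K : M2 := adjugate b * a with hK
  have keytr : ∀ u : M2, u.trace = 0 → u.det = 1 → trace (K * u) = 0 := by
    intro u htru hdetu
    have h2 := (key u htru hdetu).2
    rw [bform_tr, ← mul_assoc, ← hK] at h2
    linarith
  have t1 := keytr !![0,1;-1,0] (by simp [Matrix.trace_fin_two]) (by simp [Matrix.det_fin_two])
  have t2 := keytr !![1,1;-2,-1] (by simp [Matrix.trace_fin_two])
    (by norm_num [Matrix.det_fin_two])
  have t3 := keytr !![-1,1;-2,1] (by simp [Matrix.trace_fin_two])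
    (by norm_num [Matrix.det_fin_two])
  simp only [Matrix.trace_fin_two, Matrix.mul_apply, Fin.sum_univ_two] at t1 t2 t3
  norm_num [Matrix.cons_val_zero, Matrix.cons_val_one] at t1 t2 t3
  have hK01 : K 0 1 = 0 := by linarith
  have hK10 : K 1 0 = 0 := by linarith
  have hK0011 : K 0 0 = K 1 1 := by linarith
  have hKscal : K = (K 0 0) • (1 : M2) := by
    ext i j
    fin_cases i <;> fin_cases j <;>
      simp [Matrix.one_apply, hK01, hK10] <;> linarith
  have hbK : b * K = a := by
    rw [hK, ← mul_assoc, Matrix.mul_adjugate, hb, one_smul, one_mul]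
  rw [hKscal, mul_smul_comm, mul_one] at hbK
  have hlam : (K 0 0)^2 = 1 := by
    have h2 := congrArg Matrix.det hbK
    rw [Matrix.det_smul, hb, ha, Fintype.card_fin, mul_one] at h2
    exact h2
  have : (K 0 0 - 1) * (K 0 0 + 1) = 0 := by nlinarith
  rcases mul_eq_zero.1 this with h | h
  · left; rw [← hbK, show K 0 0 = 1 by linarith, one_smul]
  · right; rw [← hbK, show K 0 0 = -1 by linarith, neg_one_smul]

lemma strip (P u X Y : M2) (hP : P.det = 1) (husq : u*u = -1) (κ : ℝ)
    (hEq : P * X * u = κ • (P * Y * u)) : X = κ • Y := by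
  have h1 : X * u = κ • (Y * u) := by
    have h0 := congrArg (fun m => adjugate P * m) hEq
    simp only [mul_smul_comm, ← mul_assoc, QP_one P hP, one_mul] at h0
    exact h0
  have h2 := congrArg (fun m => m * (-u)) h1
  simp only [smul_mul_assoc, mul_assoc, mul_neg, husq, neg_neg, mul_one] at h2
  simpa using h2

lemma mk_rot (P V : M2) (hP : P.det = 1) (hPV : bform P V = 0) (hV : bform V V = 1)
    (c : ℝ) : ∃ g h : SL2, IsRot P V g h ∧ ∀ z : M2,
      adsAct g h z = P * rotE (adjugate P * V) c * adjugate P * z *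
        rotE (adjugate P * V) (-c) := by
  set W := adjugate P * V with hWdef
  have htrW : trace W = 0 := trW_eq P V hPV
  have hdetW : W.det = -1 := detW_eq P V hP hV
  have hWW : W*W = 1 := WW_eq P V hP hPV hV
  have hdetg : (P * rotE W c * adjugate P).det = 1 := by
    rw [det_mul, det_mul, hP, rotE_det W htrW hdetW c, Matrix.det_adjugate, hP]
    norm_num
  refine ⟨⟨P * rotE W c * adjugate P, hdetg⟩, ⟨rotE W c, rotE_det W htrW hdetW c⟩, ?_, ?_⟩
  · intro t
    left
    have hact : adsAct ⟨P * rotE W c * adjugate P, hdetg⟩ ⟨rotE W c, rotE_det W htrW hdetW c⟩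
        (geo P V t) = (P * rotE W c * adjugate P) * (geo P V t) * rotE W (-c) := by
      show (P * rotE W c * adjugate P) * (geo P V t) *
        (((⟨rotE W c, rotE_det W htrW hdetW c⟩ : SL2)⁻¹ : SL2) : M2) = _
      show (P * rotE W c * adjugate P) * (geo P V t) * adjugate (rotE W c) = _
      rw [adj_rotE W htrW]
    rw [hact, geo_eq P V hP t]
    exact act_geo P (adjugate P) W (QP_one P hP) hWW c t
  · intro z
    show (P * rotE W c * adjugate P) * z *
      (((⟨rotE W c, rotE_det W htrW hdetW c⟩ : SL2)⁻¹ : SL2) : M2) = _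
    show (P * rotE W c * adjugate P) * z * adjugate (rotE W c) = _
    rw [adj_rotE W htrW]

/-- Rotations around a spacelike geodesic `l` act freely and transitively on the dual
geodesic `l*` and on the spacelike planes containing `l`; consequently, for any two
spacelike planes containing `l` there is a unique rotation around `l` taking one to the
other. -/
theorem rotations_act_freely_transitively
    (P V : Matrix (Fin 2) (Fin 2) ℝ)
    (hP : P.det = 1) (hPV : bform P V = 0) (hV : bform V V = 1) :
    -- transitivity on `l*`:
    (∀ x₁ ∈ dualGeo P V, ∀ x₂ ∈ dualGeo P V, ∃ g h,
      IsRot P V g h ∧ (adsAct g h x₁ = x₂ ∨ adsAct g h x₁ = -x₂)) ∧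
    -- freeness on `l*`:
    (∀ g h, IsRot P V g h → ∀ x₁ ∈ dualGeo P V,
      (adsAct g h x₁ = x₁ ∨ adsAct g h x₁ = -x₁) → ProjTrivial g h) ∧
    -- free transitivity on spacelike planes containing `l` (parametrized by their
    -- dual points on `l*`), with uniqueness of the rotation:
    (∀ x₁ ∈ dualGeo P V, ∀ x₂ ∈ dualGeo P V, ∃ g h,
      IsRot P V g h ∧ adsAct g h '' dualPlane x₁ = dualPlane x₂ ∧
      ∀ g' h', IsRot P V g' h' → adsAct g' h' '' dualPlane x₁ = dualPlane x₂ →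
        ∀ z : Matrix (Fin 2) (Fin 2) ℝ, z.det = 1 →
          adsAct g h z = adsAct g' h' z ∨ adsAct g h z = -(adsAct g' h' z)) := by

  set W : M2 := adjugate P * V with hWdef
  have htrW : trace W = 0 := trW_eq P V hPV
  have hdetW : W.det = -1 := detW_eq P V hP hV
  have hWW : W*W = 1 := WW_eq P V hP hPV hV
  have main : ∀ x₁ ∈ dualGeo P V, ∀ x₂ ∈ dualGeo P V,
      ∃ (u₁ : M2) (c σ : ℝ) (g h : SL2),
        (σ = 1 ∨ σ = -1) ∧ IsRot P V g h ∧ x₁ = P * u₁ ∧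
        u₁ * W = -(W * u₁) ∧ u₁ * u₁ = -1 ∧
        (∀ z : M2, adsAct g h z = P * rotE W c * adjugate P * z * rotE W (-c)) ∧
        P * rotE W (2*c) * u₁ = σ • x₂ := by
    intro x₁ hx₁ x₂ hx₂
    obtain ⟨u₁, hx1u, hdetu₁, htru₁, hanti₁, husq₁⟩ := dualGeo_decomp P V hP hPV hV x₁ hx₁
    obtain ⟨u₂, hx2u, hdetu₂, htru₂, hanti₂, husq₂⟩ := dualGeo_decomp P V hP hPV hV x₂ hx₂
    set m : M2 := -(u₂ * u₁) with hm
    have hmW : m * W = W * m := by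
      have e : (u₂*u₁)*W = W*(u₂*u₁) := by
        rw [mul_assoc, hanti₁, mul_neg, ← mul_assoc, hanti₂, neg_mul, neg_neg, mul_assoc]
      rw [hm, neg_mul, e, mul_neg]
    have hdetm : m.det = 1 := by
      rw [hm, Matrix.det_neg, det_mul, hdetu₂, hdetu₁]
      simp
    have hmsu : m * u₁ = u₂ := by
      rw [hm, neg_mul, mul_assoc, husq₁, mul_neg, mul_one, neg_neg]
    obtain ⟨c₀, hc₀⟩ := eq_pm_rotE W m htrW hdetW hWW hmW hdetm
    obtain ⟨g, h, hrot, hact⟩ := mk_rot P V hP hPV hV (c₀/2)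
    have h2c : 2*(c₀/2) = c₀ := by ring
    rcases hc₀ with hc₀ | hc₀
    · refine ⟨u₁, c₀/2, 1, g, h, Or.inl rfl, hrot, hx1u, hanti₁, husq₁, hact, ?_⟩
      rw [h2c, ← hc₀, one_smul, hx2u, mul_assoc, hmsu]
    · refine ⟨u₁, c₀/2, -1, g, h, Or.inr rfl, hrot, hx1u, hanti₁, husq₁, hact, ?_⟩
      have hmneg : rotE W c₀ = -m := by rw [hc₀, neg_neg]
      rw [h2c, hmneg, hx2u, mul_neg, neg_mul, mul_assoc, hmsu, neg_one_smul]
  refine ⟨?_, ?_, ?_⟩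
  · -- part 1: transitivity on l*
    intro x₁ hx₁ x₂ hx₂
    obtain ⟨u₁, c, σ, g, h, hσ, hrot, hx1u, hanti₁, husq₁, hact, him⟩ := main x₁ hx₁ x₂ hx₂
    refine ⟨g, h, hrot, ?_⟩
    have hx : adsAct g h x₁ = σ • x₂ := by
      rw [hact x₁]
      have e2 : P * rotE W c * adjugate P * x₁ * rotE W (-c) = P * rotE W (2*c) * u₁ := by
        rw [hx1u]; exact act_core P (adjugate P) W u₁ (QP_one P hP) hWW hanti₁ c
      rw [e2]; exact him
    rcases hσ with hσ | hσ
    · left; rw [hx, hσ, one_smul]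
    · right; rw [hx, hσ, neg_one_smul]
  · -- part 2: freeness
    intro g h hrot x₁ hx₁ hfix
    obtain ⟨ε, c, hε, hform⟩ := rot_classify P V hP hPV hV g h hrot
    obtain ⟨u₁, hx1u, hdetu₁, htru₁, hanti₁, husq₁⟩ := dualGeo_decomp P V hP hPV hV x₁ hx₁
    have hε2 : ε * ε = 1 := by rcases hε with h'|h' <;> rw [h'] <;> norm_num
    have hactx : adsAct g h x₁ = ε • (P * rotE W (2*c) * u₁) := by
      rw [hform x₁]
      have e2 : P * rotE W c * adjugate P * x₁ * rotE W (-c) = P * rotE W (2*c) * u₁ := by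
        rw [hx1u]; exact act_core P (adjugate P) W u₁ (QP_one P hP) hWW hanti₁ c
      rw [e2]
    have hfix' : ∃ τ : ℝ, P * rotE W (2*c) * u₁ = τ • (P * (1:M2) * u₁) := by
      rcases hfix with hf | hf
      · refine ⟨ε, ?_⟩
        have e3 : ε • (P * rotE W (2*c) * u₁) = P * (1:M2) * u₁ := by
          rw [← hactx, hf, hx1u, mul_one]
        calc P * rotE W (2*c) * u₁ = ε • (ε • (P * rotE W (2*c) * u₁)) := by
              rw [smul_smul, hε2, one_smul]
          _ = ε • (P * (1:M2) * u₁) := by rw [e3]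
      · refine ⟨-ε, ?_⟩
        have e3 : ε • (P * rotE W (2*c) * u₁) = -(P * (1:M2) * u₁) := by
          rw [← hactx, hf, hx1u, mul_one]
        calc P * rotE W (2*c) * u₁ = ε • (ε • (P * rotE W (2*c) * u₁)) := by
              rw [smul_smul, hε2, one_smul]
          _ = ε • -(P * (1:M2) * u₁) := by rw [e3]
          _ = (-ε) • (P * (1:M2) * u₁) := by rw [smul_neg, neg_smul]
    obtain ⟨τ, hPE⟩ := hfix'
    have hE1 : rotE W (2*c) = τ • (1:M2) := strip P u₁ _ _ hP husq₁ τ hPE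
    have hc0 : c = 0 := by
      have h0 : (Real.cosh (2*c) - τ) • (1:M2) + Real.sinh (2*c) • W = 0 := by
        rw [rotE] at hE1
        linear_combination (norm := module) hE1
      obtain ⟨h1, h2⟩ := indep W htrW hdetW _ _ h0
      have h3 := Real.sinh_eq_zero.1 h2
      linarith
    intro z hz
    have hz' := hform z
    rw [hc0, neg_zero, rotE_zero, mul_one, mul_one, PQ_one P hP, one_mul] at hz'
    rcases hε with h'|h'
    · left; rw [hz', h', one_smul]
    · right; rw [hz', h', neg_one_smul]
  · -- part 3: planes
    intro x₁ hx₁ x₂ hx₂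
    obtain ⟨u₁, c, σ, g, h, hσ, hrot, hx1u, hanti₁, husq₁, hact, him⟩ := main x₁ hx₁ x₂ hx₂
    have hσ2 : σ * σ = 1 := by rcases hσ with h'|h' <;> rw [h'] <;> norm_num
    have hσne : σ ≠ 0 := by rcases hσ with h'|h' <;> rw [h'] <;> norm_num
    have hx : adsAct g h x₁ = σ • x₂ := by
      rw [hact x₁]
      have e2 : P * rotE W c * adjugate P * x₁ * rotE W (-c) = P * rotE W (2*c) * u₁ := by
        rw [hx1u]; exact act_core P (adjugate P) W u₁ (QP_one P hP) hWW hanti₁ c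
      rw [e2]; exact him
    refine ⟨g, h, hrot, ?_, ?_⟩
    · rw [image_dualPlane, hx, dualPlane_smul σ hσne]
    · intro g' h' hrot' him'
      obtain ⟨ε', c', hε', hform'⟩ := rot_classify P V hP hPV hV g' h' hrot'
      have hε'2 : ε' * ε' = 1 := by rcases hε' with h'|h' <;> rw [h'] <;> norm_num
      have h1 : dualPlane (adsAct g' h' x₁) = dualPlane x₂ := by
        rw [← image_dualPlane]; exact him'
      have hdx1 : (adsAct g' h' x₁).det = 1 := by rw [det_adsAct]; exact hx₁.1
      obtain h2 := dualPlane_inj _ _ hdx1 hx₂.1 h1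
      have h3 : adsAct g' h' x₁ = ε' • (P * rotE W (2*c') * u₁) := by
        rw [hform' x₁]
        have e2 : P * rotE W c' * adjugate P * x₁ * rotE W (-c') = P * rotE W (2*c') * u₁ := by
          rw [hx1u]; exact act_core P (adjugate P) W u₁ (QP_one P hP) hWW hanti₁ c'
        rw [e2]
      have hx₂eq : x₂ = σ • (P * rotE W (2*c) * u₁) := by
        calc x₂ = σ • (σ • x₂) := by rw [smul_smul, hσ2, one_smul]
          _ = σ • (P * rotE W (2*c) * u₁) := by rw [him]
      have key : ∃ κ : ℝ, P * rotE W (2*c') * u₁ = κ • (P * rotE W (2*c) * u₁) := by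
        rcases h2 with h2 | h2
        · refine ⟨ε' * σ, ?_⟩
          have e4 : ε' • (P * rotE W (2*c') * u₁) = σ • (P * rotE W (2*c) * u₁) := by
            rw [← h3, h2, hx₂eq]
          calc P * rotE W (2*c') * u₁ = ε' • (ε' • (P * rotE W (2*c') * u₁)) := by
                rw [smul_smul, hε'2, one_smul]
            _ = ε' • (σ • (P * rotE W (2*c) * u₁)) := by rw [e4]
            _ = (ε'*σ) • (P * rotE W (2*c) * u₁) := by rw [smul_smul]
        · refine ⟨-(ε' * σ), ?_⟩
          have e4 : ε' • (P * rotE W (2*c') * u₁) = -(σ • (P * rotE W (2*c) * u₁)) := by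
            rw [← h3, h2, hx₂eq]
          calc P * rotE W (2*c') * u₁ = ε' • (ε' • (P * rotE W (2*c') * u₁)) := by
                rw [smul_smul, hε'2, one_smul]
            _ = ε' • -(σ • (P * rotE W (2*c) * u₁)) := by rw [e4]
            _ = (-(ε'*σ)) • (P * rotE W (2*c) * u₁) := by
                rw [smul_neg, smul_smul, neg_smul]
      obtain ⟨κ, hκeq⟩ := key
      have hEκ : rotE W (2*c') = κ • rotE W (2*c) := strip P u₁ _ _ hP husq₁ κ hκeq
      have hdiff : rotE W (2*c' + -(2*c)) = κ • (1:M2) := by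
        have h5 := congrArg (fun m => m * rotE W (-(2*c))) hEκ
        simp only [smul_mul_assoc] at h5
        rw [rotE_mul W hWW, rotE_mul W hWW] at h5
        rw [show 2*c + -(2*c) = 0 by ring, rotE_zero] at h5
        exact h5
      have hcc : c' = c := by
        have h0 : (Real.cosh (2*c' + -(2*c)) - κ) • (1:M2) +
            Real.sinh (2*c' + -(2*c)) • W = 0 := by
          rw [rotE] at hdiff
          linear_combination (norm := module) hdiff
        obtain ⟨h1', h2'⟩ := indep W htrW hdetW _ _ h0
        have h3' := Real.sinh_eq_zero.1 h2'
        linarith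
      intro z hz
      have hgz := hact z
      have hg'z := hform' z
      rw [hcc] at hg'z
      rcases hε' with h'|h'
      · left; rw [hgz, hg'z, h', one_smul]
      · right; rw [hgz, hg'z, h', neg_one_smul, neg_neg]
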